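/- Let k ≥ 2 and suppose nonnegative integers n ≥ m ≥ l ≥ 0, d ≥ 2, 1 ≤ a ≤ 9 satisfy L_n^{(k)} · L_m^{(k)} · L_l^{(k)} = a·(10^d − 1)/9. Then |α^{−(n+m−2)} · 10^d · f_k(α)^{−2} · (2α − 1)^{−2} · (L_l^{(k)})^{−1} · (a/9) − 1| < (25/4)/α^{m−2}, where α is the dominant root of x^k − x^{k−1} − ⋯ − x − 1. -/

import Mathlib

set_option maxHeartbeats 1000000

/-- The `k`-generalized Lucas sequence: `L 0 = 2`, `L 1 = 1`, and for `n ≥ 2`,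
`L n = L (n-1) + L (n-2) + ⋯ + L (n-k)`, where terms with negative index count as `0`. -/
def lucasK (k : ℕ) : ℕ → ℕ
  | 0 => 2
  | 1 => 1
  | n + 2 => ∑ j ∈ Finset.range k, if _ : j ≤ n + 1 then lucasK k (n + 1 - j) else 0
termination_by n => n
decreasing_by omega

lemma lucasK_zero (k : ℕ) : lucasK k 0 = 2 := by rw [lucasK]
lemma lucasK_one (k : ℕ) : lucasK k 1 = 1 := by rw [lucasK]

lemma lucasK_step (k t : ℕ) :
    lucasK k (t+2) = ∑ j ∈ Finset.range k, if j ≤ t + 1 then lucasK k (t + 1 - j) else 0 := by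
  rw [lucasK]
  exact Finset.sum_congr rfl fun j _ => by split_ifs <;> simp [*]

lemma lucasK_pos (k : ℕ) (hk : 1 ≤ k) : ∀ n, 0 < lucasK k n := by
  intro n
  induction n using Nat.strong_induction_on with
  | _ n ih =>
    match n with
    | 0 => simp [lucasK_zero]
    | 1 => simp [lucasK_one]
    | t + 2 =>
      rw [lucasK_step]
      have h0 : (0:ℕ) ∈ Finset.range k := by simp; omega
      have h1 := Finset.single_le_sum (f := fun j => if j ≤ t + 1 then lucasK k (t + 1 - j) else 0)
        (fun j _ => Nat.zero_le _) h0
      simp only [Nat.zero_le, if_true, Nat.sub_zero] at h1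
      have h2 : 0 < lucasK k (t+1) := ih (t+1) (by omega)
      omega

lemma lucasK_two (k : ℕ) (hk : 2 ≤ k) : lucasK k 2 = 3 := by
  have h : lucasK k 2 = lucasK k (0+2) := rfl
  rw [h, lucasK_step]
  rw [← Finset.sum_subset (Finset.range_subset_range.2 hk) (fun j _ hj => by
    have hj2 : ¬ j ≤ 0 + 1 := by simp at hj ⊢; omega
    simp [hj2])]
  simp [Finset.sum_range_succ, lucasK_zero, lucasK_one]

lemma nat_ineq1 (k : ℕ) (hk : 2 ≤ k) : 4 * (k + 1) ≤ 3 * 2 ^ k := by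
  induction k, hk using Nat.le_induction with
  | base => norm_num
  | succ k hk2 ih =>
    have h4 : 4 ≤ 2 ^ k := by
      calc 4 = 2^2 := by norm_num
        _ ≤ 2^k := Nat.pow_le_pow_right (by norm_num) hk2
    rw [pow_succ]; omega

lemma nat_ineq2 (k : ℕ) (hk : 3 ≤ k) : 3 * k ≤ 2 ^ k + 1 := by
  induction k, hk using Nat.le_induction with
  | base => norm_num
  | succ k hk2 ih =>
    have h4 : 8 ≤ 2 ^ k := by
      calc 8 = 2^3 := by norm_num
        _ ≤ 2^k := Nat.pow_le_pow_right (by norm_num) hk2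
    rw [pow_succ]; omega

/-- All the facts about the dominant root and the constant `c` we need. -/
lemma alpha_facts (k : ℕ) (hk : 2 ≤ k)
    (α : ℝ) (hroot : α ^ k = ∑ i ∈ Finset.range k, α ^ i)
    (hα₁ : 2 * (1 - (2 : ℝ) ^ (-(k : ℤ))) < α) (hα₂ : α < 2) :
    8/5 < α ∧ α ^ k * (2 - α) = 1 ∧ 1/2 < 2 + ((k:ℝ) + 1) * (α - 2) ∧
      1/2 < (α - 1) / (2 + ((k:ℝ) + 1) * (α - 2)) ∧
      α - 1/2 < (α - 1) / (2 + ((k:ℝ) + 1) * (α - 2)) * (2*α - 1) ∧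
      (α - 1) / (2 + ((k:ℝ) + 1) * (α - 2)) * (2*α - 1) < 9/4 ∧
      ((α - 1) / (2 + ((k:ℝ) + 1) * (α - 2)) * (2*α - 1)) * (2 + ((k:ℝ) + 1) * (α - 2))
        = (2*α - 1) * (α - 1) := by
  have hKR : (2:ℝ) ≤ (k:ℝ) := by exact_mod_cast hk
  have hppos : (0:ℝ) < 2 ^ k := by positivity
  have hxe : (2:ℝ) ^ (-(k:ℤ)) * 2 ^ k = 1 := by
    rw [zpow_neg, zpow_natCast]; field_simp
  have hxpos : (0:ℝ) < 2 ^ (-(k:ℤ)) := by positivity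
  have hp4 : (4:ℝ) ≤ 2 ^ k := by
    calc (4:ℝ) = 2^2 := by norm_num
      _ ≤ 2^k := by apply pow_le_pow_right₀ (by norm_num) hk
  have hx4 : (2:ℝ) ^ (-(k:ℤ)) ≤ 1/4 := by nlinarith
  have hα32 : (3:ℝ)/2 < α := by nlinarith
  have hα0 : (0:ℝ) < α := by linarith
  have hgeom : α ^ k * (2 - α) = 1 := by
    have h1 : (∑ i ∈ Finset.range k, α ^ i) * (α - 1) = α ^ k - 1 := geom_sum_mul α k
    rw [← hroot] at h1
    nlinarith [h1]
  have hα85 : (8:ℝ)/5 < α := by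
    rcases eq_or_lt_of_le hk with hk2 | hk3
    · have hk2' : 2 = k := hk2
      subst hk2'
      have h2 : α ^ 2 = 1 + α := by
        rw [hroot]; simp [Finset.sum_range_succ]
      nlinarith
    · have hk3' : (3:ℕ) ≤ k := hk3
      have hp8 : (8:ℝ) ≤ 2 ^ k := by
        calc (8:ℝ) = 2^3 := by norm_num
          _ ≤ 2^k := by apply pow_le_pow_right₀ (by norm_num) hk3'
      have : (2:ℝ) ^ (-(k:ℤ)) ≤ 1/8 := by nlinarith
      nlinarith
  have hnat1 : (4:ℝ) * ((k:ℝ) + 1) ≤ 3 * 2 ^ k := by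
    have h := nat_ineq1 k hk
    have h' : ((4 * (k+1) : ℕ) : ℝ) ≤ ((3 * 2^k : ℕ) : ℝ) := by exact_mod_cast h
    push_cast at h'
    linarith
  have h2α : (0:ℝ) < 2 - α := by linarith
  have h2αx : 2 - α < 2 * 2 ^ (-(k:ℤ)) := by linarith
  have hD2 : 1/2 < 2 + ((k:ℝ) + 1) * (α - 2) := by
    have h1 : ((k:ℝ)+1) * (2-α) < ((k:ℝ)+1) * (2 * 2 ^ (-(k:ℤ))) :=
      mul_lt_mul_of_pos_left h2αx (by linarith)
    have h2' := mul_le_mul_of_nonneg_right hnat1 hxpos.le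
    have h2 : ((k:ℝ)+1) * (2 * 2 ^ (-(k:ℤ))) ≤ 3/2 := by nlinarith [h2', hxe]
    nlinarith
  have hDpos : (0:ℝ) < 2 + ((k:ℝ) + 1) * (α - 2) := by linarith
  have h3k : (3*(k:ℝ) - 1) * (2 - α) < 2 := by
    rcases eq_or_lt_of_le hk with hk2 | hk3
    · have hk2' : 2 = k := hk2
      subst hk2'
      push_cast
      nlinarith
    · have hk3' : (3:ℕ) ≤ k := hk3
      have hnat2 : 3*(k:ℝ) ≤ 2 ^ k + 1 := by
        have h := nat_ineq2 k hk3'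
        have h' : ((3 * k : ℕ) : ℝ) ≤ ((2^k + 1 : ℕ) : ℝ) := by exact_mod_cast h
        push_cast at h'
        linarith
      have h1 : (3*(k:ℝ) - 1) * (2-α) < (3*(k:ℝ) - 1) * (2 * 2 ^ (-(k:ℤ))) :=
        mul_lt_mul_of_pos_left h2αx (by nlinarith)
      have h2' := mul_le_mul_of_nonneg_right (by linarith [hnat2] : 3*(k:ℝ) - 1 ≤ 2^k)
        (le_of_lt (by positivity : (0:ℝ) < 2 * 2 ^ (-(k:ℤ))))
      have h2 : (3*(k:ℝ) - 1) * (2 * 2 ^ (-(k:ℤ))) ≤ 2 := by nlinarith [h2', hxe]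
      linarith
  have hF12 : 1/2 < (α - 1) / (2 + ((k:ℝ) + 1) * (α - 2)) := by
    rw [lt_div_iff₀ hDpos]
    nlinarith
  have hF34 : (α - 1) / (2 + ((k:ℝ) + 1) * (α - 2)) < 3/4 := by
    rw [div_lt_iff₀ hDpos]
    nlinarith
  have h2α1 : (0:ℝ) < 2*α - 1 := by linarith
  refine ⟨hα85, hgeom, hD2, hF12, by nlinarith, by nlinarith, by field_simp⟩

lemma binet (k' : ℕ) (α c : ℝ)
    (hα85 : 8/5 < α) (hα₂ : α < 2)
    (hroot : α ^ (k'+2) = ∑ i ∈ Finset.range (k'+2), α ^ i)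
    (hgeom : α ^ (k'+2) * (2 - α) = 1)
    (hc_lo : α - 1/2 < c) (hc_hi : c < 9/4)
    (hcD : c * (2 + ((k':ℝ) + 2 + 1) * (α - 2)) = (2*α - 1) * (α - 1)) :
    ∀ j : ℕ, |(lucasK (k'+2) j : ℝ) - c * α ^ ((j:ℤ) - 1)| ≤ 27/20 := by
  have hα0 : (0:ℝ) < α := by linarith
  have hα1 : (1:ℝ) < α := by linarith
  have hcpos : (0:ℝ) < c := by linarith
  have hc1 : (11:ℝ)/10 < c := by linarith
  set e : ℤ → ℝ := fun t => (if 0 ≤ t then (lucasK (k'+2) t.toNat : ℝ) else 0) - c * α ^ (t - 1)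
    with hedef
  have he1 : e 1 = 1 - c := by simp [hedef, lucasK_one]
  have he0 : e 0 = 2 - c * α ^ (-1 : ℤ) := by simp [hedef, lucasK_zero]
  have heneg : ∀ t : ℤ, t < 0 → e t = -(c * α ^ (t - 1)) := by
    intro t ht
    simp [hedef, not_le.2 ht]
  have hsumpow : ∀ t : ℤ, (∑ i ∈ Finset.range (k'+2), α ^ (t - 1 - (i:ℤ))) = α ^ t := by
    intro t
    have h1 : ∀ i ∈ Finset.range (k'+2), α ^ (t - 1 - (i:ℤ)) =
        α ^ (t - ((k'+2:ℕ):ℤ)) * α ^ ((k' + 2 - 1 - i : ℕ):ℤ) := by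
      intro i hi
      rw [← zpow_add₀ hα0.ne']
      congr 1
      have hik : i < k' + 2 := Finset.mem_range.1 hi
      omega
    rw [Finset.sum_congr rfl h1, ← Finset.mul_sum]
    have h2 : (∑ i ∈ Finset.range (k'+2), α ^ ((k' + 2 - 1 - i : ℕ):ℤ)) = α ^ ((k'+2:ℕ):ℤ) := by
      have h3 : ∀ i ∈ Finset.range (k'+2), α ^ ((k' + 2 - 1 - i : ℕ):ℤ) = α ^ (k' + 2 - 1 - i : ℕ) := by
        intro i _; rw [zpow_natCast]
      rw [Finset.sum_congr rfl h3, Finset.sum_range_reflect (fun i => α ^ i) (k'+2),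
        ← hroot, zpow_natCast]
    rw [h2, ← zpow_add₀ hα0.ne']
    congr 1
    ring
  have hRec : ∀ t : ℤ, 2 ≤ t → e t = ∑ i ∈ Finset.range (k'+2), e (t - 1 - (i:ℤ)) := by
    intro t ht
    obtain ⟨N, rfl⟩ : ∃ N : ℕ, t = (N:ℤ) + 2 := ⟨(t-2).toNat, by omega⟩
    have hL : ((lucasK (k'+2) (N+2) : ℝ)) = ∑ i ∈ Finset.range (k'+2),
        (if 0 ≤ (N:ℤ) + 2 - 1 - (i:ℤ) then (lucasK (k'+2) (((N:ℤ) + 2 - 1 - (i:ℤ)).toNat) : ℝ)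
          else 0) := by
      rw [lucasK_step]
      push_cast
      apply Finset.sum_congr rfl
      intro i _
      by_cases hiN : i ≤ N + 1
      · rw [if_pos (by exact_mod_cast hiN), if_pos (by omega)]
        congr 2
        omega
      · rw [if_neg (by exact_mod_cast hiN), if_neg (by omega)]
    have hpow : ∑ i ∈ Finset.range (k'+2), c * α ^ ((N:ℤ) + 2 - 1 - (i:ℤ) - 1)
        = c * α ^ ((N:ℤ) + 2 - 1) := by
      rw [← Finset.mul_sum]
      congr 1
      have h4 : ∀ i ∈ Finset.range (k'+2), α ^ ((N:ℤ) + 2 - 1 - (i:ℤ) - 1)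
          = α ^ (((N:ℤ) + 1) - 1 - (i:ℤ)) := by
        intro i _; congr 1; ring
      rw [Finset.sum_congr rfl h4, hsumpow ((N:ℤ)+1)]
      congr 1
      ring
    simp only [hedef]
    rw [Finset.sum_sub_distrib, hpow]
    rw [if_pos (by omega : (0:ℤ) ≤ (N:ℤ) + 2)]
    have htn : ((N:ℤ) + 2).toNat = N + 2 := by omega
    rw [htn, hL]
  have hR2 : ∀ t : ℤ, 3 ≤ t → e t = 2 * e (t-1) - e (t - 1 - ((k' + 2 : ℕ):ℤ)) := by
    intro t ht
    have h1 := hRec t (by omega)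
    have h2 := hRec (t-1) (by omega)
    rw [Finset.sum_range_succ' (fun i => e (t - 1 - (i:ℤ))) (k'+1)] at h1
    rw [Finset.sum_range_succ (fun i => e (t - 1 - 1 - (i:ℤ))) (k'+1)] at h2
    have h3 : ∀ i ∈ Finset.range (k'+1), e (t - 1 - ((i+1 : ℕ):ℤ)) = e (t - 1 - 1 - (i:ℤ)) := by
      intro i _
      congr 1
      push_cast
      ring
    rw [Finset.sum_congr rfl h3] at h1
    have h4 : t - 1 - 1 - ((k'+1 : ℕ):ℤ) = t - 1 - ((k' + 2 : ℕ):ℤ) := by push_cast; ring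
    rw [h4] at h2
    have h5 : t - 1 - ((0:ℕ):ℤ) = t - 1 := by push_cast; ring
    rw [h5] at h1
    linarith [h1, h2]
  have hC : ∀ t : ℤ, 2 ≤ t →
      α ^ (k'+2) * e t = ∑ i ∈ Finset.range (k'+2), α ^ i * e (t - 1 - (i:ℤ)) := by
    have hCn : ∀ N : ℕ, α ^ (k'+2) * e (2 + (N:ℤ))
        = ∑ i ∈ Finset.range (k'+2), α ^ i * e (2 + (N:ℤ) - 1 - (i:ℤ)) := by
      intro N
      induction N with
      | zero =>
        have h20 : (2:ℤ) + ((0:ℕ):ℤ) = 2 := by norm_num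
        rw [h20]
        have hterm : ∀ i ∈ Finset.range (k'+2), α ^ i * e (2 - 1 - (i:ℤ)) =
            -c + ((if i = 0 then (1:ℝ) else 0) + (if i = 1 then 2*α else 0)) := by
          intro i _
          match i with
          | 0 =>
            have h1 : ((2:ℤ) - 1 - ((0:ℕ):ℤ)) = 1 := by norm_num
            rw [h1, he1]
            norm_num
            ring
          | 1 =>
            have h2 : ((2:ℤ) - 1 - ((1:ℕ):ℤ)) = 0 := by norm_num
            rw [h2, he0]
            simp only [pow_one]
            norm_num [zpow_neg_one]
            field_simp
            ring
          | (i+2) =>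
            have hneg : ((2:ℤ) - 1 - ((i+2:ℕ):ℤ)) < 0 := by push_cast; omega
            rw [heneg _ hneg]
            have h7 : α ^ (i+2) * α ^ ((2:ℤ) - 1 - ((i+2:ℕ):ℤ) - 1) = 1 := by
              rw [← zpow_natCast α (i+2), ← zpow_add₀ hα0.ne']
              have h8 : ((i+2:ℕ):ℤ) + ((2:ℤ) - 1 - ((i+2:ℕ):ℤ) - 1) = 0 := by push_cast; ring
              rw [h8, zpow_zero]
            have h6 : α ^ (i+2) * -(c * α ^ ((2:ℤ) - 1 - ((i+2:ℕ):ℤ) - 1)) = -c := by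
              nlinarith [h7]
            rw [h6]
            simp
        rw [Finset.sum_congr rfl hterm]
        rw [Finset.sum_add_distrib, Finset.sum_add_distrib, Finset.sum_const, Finset.card_range]
        rw [Finset.sum_ite_eq' (Finset.range (k'+2)) 0 (fun _ => (1:ℝ)),
          Finset.sum_ite_eq' (Finset.range (k'+2)) 1 (fun _ => 2*α)]
        rw [if_pos (by simp), if_pos (by simp [Finset.mem_range])]
        have he2 : e 2 = 3 - c * α := by
          have h8 : ((2:ℤ).toNat) = 2 := rfl
          simp only [hedef]
          rw [if_pos (by norm_num : (0:ℤ) ≤ 2), h8, lucasK_two _ (by omega)]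
          norm_num
        rw [he2]
        have hsm : ((k'+2:ℕ) • (-c) : ℝ) = -((k':ℝ)+2) * c := by
          push_cast [nsmul_eq_mul]
          ring
        rw [hsm]
        have hgoal : (2 - α) * (α ^ (k'+2) * (3 - c * α)
            - (-((k':ℝ)+2) * c + ((1:ℝ) + 2*α))) = 0 := by
          linear_combination (3 - c*α) * hgeom - hcD
        have hne : (2 - α) ≠ 0 := by linarith
        rcases mul_eq_zero.1 hgoal with h | h
        · exact absurd h hne
        · linarith [sub_eq_zero.1 h]
      | succ N ih =>
        have ht2 : (2:ℤ) ≤ 2 + (N:ℤ) := by omega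
        set t : ℤ := 2 + (N:ℤ) with htd
        have hrw : (2:ℤ) + ((N+1:ℕ):ℤ) = t + 1 := by rw [htd]; push_cast; ring
        rw [hrw]
        have hb := hR2 (t+1) (by omega)
        rw [Finset.sum_range_succ' (fun i => α ^ i * e (t + 1 - 1 - (i:ℤ))) (k'+1)]
        have h3 : ∀ i ∈ Finset.range (k'+1), α ^ (i+1) * e (t + 1 - 1 - ((i+1:ℕ):ℤ))
            = α * (α ^ i * e (t - 1 - (i:ℤ))) := by
          intro i _
          have h3' : (t + 1 - 1 - ((i+1:ℕ):ℤ)) = t - 1 - (i:ℤ) := by push_cast; ring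
          rw [h3', pow_succ]
          ring
        rw [Finset.sum_congr rfl h3, ← Finset.mul_sum]
        have h4 : (∑ i ∈ Finset.range (k'+1), α ^ i * e (t - 1 - (i:ℤ)))
            = α ^ (k'+2) * e t - α ^ (k'+1) * e (t - 1 - ((k'+1:ℕ):ℤ)) := by
          have h5 := Finset.sum_range_succ (fun i => α ^ i * e (t - 1 - (i:ℤ))) (k'+1)
          rw [← ih] at h5
          linarith [h5]
        rw [h4]
        have h6 : t + 1 - 1 - ((0:ℕ):ℤ) = t := by push_cast; ring
        have h6' : t + 1 - 1 = t := by ring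
        rw [h6]
        have h7 : e (t+1) = 2 * e t - e (t - 1 - ((k'+1:ℕ):ℤ)) := by
          rw [hb]
          have h9 : t + 1 - 1 - ((k'+2:ℕ):ℤ) = t - 1 - ((k'+1:ℕ):ℤ) := by push_cast; ring
          rw [h9, h6']
        rw [h7]
        linear_combination (e t) * hgeom
    intro t ht
    have h10 := hCn (t-2).toNat
    have h11 : (2:ℤ) + ((t-2).toNat : ℤ) = t := by omega
    rw [h11] at h10
    exact h10
  -- uniform bound on |e|
  have hαinv : α * α ^ (-1:ℤ) = 1 := by rw [zpow_neg_one]; field_simp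
  have hsmall : ∀ t : ℤ, t ≤ 1 → |e t| ≤ 27/20 := by
    intro t ht
    rcases lt_trichotomy t 0 with h | h | h
    · rw [heneg t h]
      have hz2 : α ^ (t-1) ≤ α ^ (-2:ℤ) := zpow_le_zpow_right₀ hα1.le (by omega)
      have hz0 : (0:ℝ) < α ^ (t-1) := zpow_pos hα0 _
      have hz3 : α ^ (-2:ℤ) * α^2 = 1 := by
        rw [← zpow_natCast α 2, ← zpow_add₀ hα0.ne']
        norm_num
      have hz4 : α ^ (-2:ℤ) ≤ 25/64 := by nlinarith [zpow_pos hα0 (-2:ℤ)]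
      rw [abs_neg, abs_of_pos (by positivity)]
      nlinarith [hz2, hz0, hz4]
    · rw [h, he0]
      have hu0 : (0:ℝ) < α ^ (-1:ℤ) := zpow_pos hα0 _
      have hu1 : α ^ (-1:ℤ) ≤ 5/8 := by nlinarith [hαinv]
      have hu2 : c * α ^ (-1:ℤ) ≥ (α - 1/2) * α ^ (-1:ℤ) := by nlinarith
      have hu3 : (α - 1/2) * α ^ (-1:ℤ) = 1 - (1/2) * α ^ (-1:ℤ) := by
        nlinarith [hαinv]
      rw [abs_le]
      constructor
      · nlinarith
      · nlinarith
    · have h1 : t = 1 := by omega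
      rw [h1, he1, abs_le]
      constructor <;> nlinarith
  have hstep : ∀ N : ℕ, ∀ t : ℤ, t ≤ 1 + N → |e t| ≤ 27/20 := by
    intro N
    induction N with
    | zero => intro t ht; exact hsmall t (by omega)
    | succ N ih =>
      intro t ht
      rcases le_or_gt t (1 + N) with h | h
      · exact ih t h
      · have ht2 : 2 ≤ t := by omega
        have hCt := hC t ht2
        have hbound : |α ^ (k'+2) * e t| ≤ α ^ (k'+2) * (27/20) := by
          rw [hCt]
          calc |∑ i ∈ Finset.range (k'+2), α ^ i * e (t - 1 - (i:ℤ))|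
              ≤ ∑ i ∈ Finset.range (k'+2), |α ^ i * e (t - 1 - (i:ℤ))| :=
                Finset.abs_sum_le_sum_abs _ _
            _ ≤ ∑ i ∈ Finset.range (k'+2), α ^ i * (27/20) := by
                apply Finset.sum_le_sum
                intro i _
                rw [abs_mul, abs_of_pos (by positivity : (0:ℝ) < α ^ i)]
                have hrec : |e (t - 1 - (i:ℤ))| ≤ 27/20 := ih _ (by omega)
                exact mul_le_mul_of_nonneg_left hrec (by positivity)
            _ = α ^ (k'+2) * (27/20) := by rw [← Finset.sum_mul, ← hroot]
        rw [abs_mul, abs_of_pos (by positivity : (0:ℝ) < α ^ (k'+2))] at hbound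
        have hpk : (0:ℝ) < α ^ (k'+2) := by positivity
        nlinarith [hbound, abs_nonneg (e t)]
  intro j
  have hball : |e (j:ℤ)| ≤ 27/20 := by
    rcases le_or_gt ((j:ℤ)) 1 with h | h
    · exact hsmall _ h
    · exact hstep (j-1) _ (by omega)
  have hej : e (j:ℤ) = (lucasK (k'+2) j : ℝ) - c * α ^ ((j:ℤ) - 1) := by
    simp only [hedef]
    rw [if_pos (by omega : (0:ℤ) ≤ (j:ℤ))]
    simp
  rwa [hej] at hball

lemma nine_dvd_pow_ten_sub_one (d : ℕ) : 9 ∣ 10 ^ d - 1 := by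
  induction d with
  | zero => simp
  | succ d ih =>
    obtain ⟨q, hq⟩ := ih
    have h1 : 1 ≤ 10 ^ d := Nat.one_le_pow _ _ (by norm_num)
    have hp : 10 ^ (d+1) = 10 ^ d * 10 := pow_succ _ _
    exact ⟨10 * q + 1, by omega⟩

lemma key_estimate (α c Ln Lm Ll aR : ℝ) (n m : ℤ)
    (hmn : m ≤ n) (hm0 : 0 ≤ m)
    (hα85 : 8/5 < α) (hα₂ : α < 2)
    (hc1 : 11/10 < c) (hc_hi : c < 9/4)
    (hLl : 1 ≤ Ll) (hLm0 : 0 ≤ Lm)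
    (hbn : |Ln - c * α ^ (n - 1)| ≤ 27/20)
    (hbm : |Lm - c * α ^ (m - 1)| ≤ 27/20)
    (haR : 0 < aR) (haR9 : aR ≤ 9) :
    |Ln * Lm * Ll + aR/9 - c^2 * α ^ (n + m - 2) * Ll| < 25/4 * c^2 * α ^ n * Ll := by
  have hα0 : (0:ℝ) < α := by linarith
  have hα1 : (1:ℝ) < α := by linarith
  have hcpos : (0:ℝ) < c := by linarith
  set y := α ^ (n - 1) with hy
  have hy0 : (0:ℝ) < y := zpow_pos hα0 _
  have hy12 : 1/2 ≤ y := by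
    have h1 : α ^ (-1:ℤ) ≤ y := zpow_le_zpow_right₀ hα1.le (by omega)
    have h2 : α * α ^ (-1:ℤ) = 1 := by rw [zpow_neg_one]; field_simp
    nlinarith [zpow_pos hα0 (-1:ℤ)]
  have hmono : α ^ (m-1) ≤ y := zpow_le_zpow_right₀ hα1.le (by omega)
  have hym0 : (0:ℝ) < α ^ (m-1) := zpow_pos hα0 _
  have hsplit : α ^ (n + m - 2) = y * α ^ (m - 1) := by
    rw [hy, ← zpow_add₀ hα0.ne']
    congr 1
    ring
  have hαn : α ^ n = α * y := by
    rw [hy, show α * α^(n-1) = α^(1:ℤ) * α^(n-1) by rw [zpow_one], ← zpow_add₀ hα0.ne']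
    congr 1
    ring
  have hLm_up : Lm ≤ c * y + 27/20 := by
    have h3 := (abs_le.1 hbm).2
    nlinarith
  have h1 : |Ln * Lm - c^2 * (y * α^(m-1))| ≤ (27/20) * (c*y + 27/20) + (c*y) * (27/20) := by
    have hkey : Ln * Lm - c^2 * (y * α^(m-1))
        = (Ln - c*y) * Lm + (c*y) * (Lm - c*α^(m-1)) := by ring
    rw [hkey]
    have ha1 : |(Ln - c*y) * Lm + (c*y) * (Lm - c*α^(m-1))|
        ≤ |Ln - c*y| * Lm + (c*y) * |Lm - c*α^(m-1)| := by
      calc |(Ln - c*y) * Lm + (c*y) * (Lm - c*α^(m-1))|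
          ≤ |(Ln - c*y) * Lm| + |(c*y) * (Lm - c*α^(m-1))| := abs_add_le _ _
        _ = |Ln - c*y| * Lm + (c*y) * |Lm - c*α^(m-1)| := by
            rw [abs_mul, abs_mul, abs_of_nonneg hLm0,
              abs_of_nonneg (by positivity : (0:ℝ) ≤ c*y)]
    have ha2 : |Ln - c*y| * Lm ≤ (27/20) * (c*y + 27/20) := by
      apply mul_le_mul hbn hLm_up hLm0 (by norm_num)
    have ha3 : (c*y) * |Lm - c*α^(m-1)| ≤ (c*y) * (27/20) :=
      mul_le_mul_of_nonneg_left hbm (by positivity)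
    linarith
  have hnum : 2*(27/20)*(c*y) + (27/20)^2 + 1 < 25/4 * c^2 * (α*y) := by
    have hcy : 11/20 < c * y := by nlinarith
    have hca : 44/25 ≤ c * α := by nlinarith
    have hbig : 11 * (c*y) ≤ 25/4 * c^2 * (α*y) := by nlinarith [mul_pos hcpos hy0]
    nlinarith
  calc |Ln * Lm * Ll + aR/9 - c^2 * α ^ (n + m - 2) * Ll|
      = |Ll * (Ln * Lm - c^2 * (y * α^(m-1))) + aR/9| := by
        rw [hsplit]; congr 1; ring
    _ ≤ Ll * |Ln * Lm - c^2 * (y * α^(m-1))| + aR/9 := by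
        calc |Ll * (Ln * Lm - c^2 * (y * α^(m-1))) + aR/9|
            ≤ |Ll * (Ln * Lm - c^2 * (y * α^(m-1)))| + |aR/9| := abs_add_le _ _
          _ = Ll * |Ln * Lm - c^2 * (y * α^(m-1))| + aR/9 := by
              rw [abs_mul, abs_of_nonneg (by linarith : (0:ℝ) ≤ Ll),
                abs_of_nonneg (by linarith : (0:ℝ) ≤ aR/9)]
    _ ≤ Ll * ((27/20) * (c*y + 27/20) + (c*y) * (27/20)) + 1 := by
        have := mul_le_mul_of_nonneg_left h1 (by linarith : (0:ℝ) ≤ Ll)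
        linarith
    _ ≤ Ll * (2*(27/20)*(c*y) + (27/20)^2 + 1) := by nlinarith
    _ < Ll * (25/4 * c^2 * (α*y)) := by
        apply mul_lt_mul_of_pos_left hnum (by linarith)
    _ = 25/4 * c^2 * α ^ n * Ll := by rw [hαn]; ring

theorem linear_form_Lambda2_bound
    (k n m l d a : ℕ) (hk : 2 ≤ k) (hnm : m ≤ n) (hml : l ≤ m)
    (hd : 2 ≤ d) (ha1 : 1 ≤ a) (ha9 : a ≤ 9)
    (heq : lucasK k n * lucasK k m * lucasK k l = a * ((10 ^ d - 1) / 9))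
    (α : ℝ) (hroot : α ^ k = ∑ i ∈ Finset.range k, α ^ i)
    (hα₁ : 2 * (1 - (2 : ℝ) ^ (-(k : ℤ))) < α) (hα₂ : α < 2) :
    |α ^ (-((n : ℤ) + m - 2)) * 10 ^ d *
        ((α - 1) / (2 + ((k : ℝ) + 1) * (α - 2))) ^ (-2 : ℤ) *
        (2 * α - 1) ^ (-2 : ℤ) * ((lucasK k l : ℝ))⁻¹ * ((a : ℝ) / 9) - 1|
      < (25 / 4) / α ^ ((m : ℤ) - 2) := by
  obtain ⟨hα85, hgeom, hD2, hF12, hc_lo, hc_hi, hcD⟩ := alpha_facts k hk α hroot hα₁ hα₂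
  have hα0 : (0:ℝ) < α := by linarith
  have h2α1 : (0:ℝ) < 2*α - 1 := by linarith
  have hDpos : (0:ℝ) < 2 + ((k:ℝ) + 1) * (α - 2) := by linarith
  set F : ℝ := (α - 1) / (2 + ((k:ℝ) + 1) * (α - 2)) with hFdef
  set c : ℝ := F * (2*α - 1) with hcdef
  have hc1 : (11:ℝ)/10 < c := by linarith
  have hcpos : (0:ℝ) < c := by linarith
  -- Binet-type bounds
  obtain ⟨k', rfl⟩ : ∃ k', k = k' + 2 := ⟨k - 2, by omega⟩
  have hcD' : c * (2 + ((k':ℝ) + 2 + 1) * (α - 2)) = (2*α - 1) * (α - 1) := by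
    have := hcD
    push_cast at this ⊢
    linarith
  have hroot' : α ^ (k'+2) = ∑ i ∈ Finset.range (k'+2), α ^ i := hroot
  have hgeom' : α ^ (k'+2) * (2 - α) = 1 := hgeom
  have hclo' : α - 1/2 < c := hc_lo
  have hBin := binet k' α c hα85 hα₂ hroot' hgeom' hclo' hc_hi hcD'
  have hbn := hBin n
  have hbm := hBin m
  -- cast the Diophantine equation
  have h10d1 : 1 ≤ 10 ^ d := Nat.one_le_pow _ _ (by norm_num)
  have h9dvd : 9 ∣ 10 ^ d - 1 := nine_dvd_pow_ten_sub_one d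
  set Ln : ℝ := (lucasK (k'+2) n : ℝ) with hLn
  set Lm : ℝ := (lucasK (k'+2) m : ℝ) with hLm
  set Ll : ℝ := (lucasK (k'+2) l : ℝ) with hLl
  have hLl1 : 1 ≤ Ll := by
    rw [hLl]
    exact_mod_cast lucasK_pos (k'+2) (by omega) l
  have hLm0 : 0 ≤ Lm := by rw [hLm]; positivity
  have hLlpos : (0:ℝ) < Ll := by linarith
  have hcastdiv : (((10 ^ d - 1) / 9 : ℕ) : ℝ) = ((10:ℝ)^d - 1) / 9 := by
    obtain ⟨q, hq⟩ := h9dvd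
    have hq2 : (10 ^ d - 1) / 9 = q := by omega
    rw [hq2]
    have hq3 : ((10:ℝ)^d - 1) = 9 * q := by
      have : ((10 ^ d - 1 : ℕ) : ℝ) = ((9 * q : ℕ) : ℝ) := congrArg (fun x : ℕ => (x:ℝ)) hq
      push_cast [Nat.cast_sub h10d1] at this
      push_cast
      linarith
    rw [hq3]
    ring
  have heqR : Ln * Lm * Ll = (a:ℝ) * (((10:ℝ)^d - 1) / 9) := by
    rw [hLn, hLm, hLl]
    rw [← hcastdiv]
    exact_mod_cast congrArg (Nat.cast : ℕ → ℝ) heq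
  -- rewrite the main expression as Q / P - 1
  set s : ℤ := (n:ℤ) + (m:ℤ) - 2 with hsdef
  set Q : ℝ := (a:ℝ) * 10^d / 9 with hQdef
  set P : ℝ := c^2 * α ^ s * Ll with hPdef
  have hPpos : (0:ℝ) < P := by
    rw [hPdef]
    have : (0:ℝ) < α ^ s := zpow_pos hα0 _
    positivity
  have hF0 : F ≠ 0 := by
    have : (0:ℝ) < F := by linarith
    linarith
  have hpow2 : ∀ x : ℝ, x ≠ 0 → x ^ (-2:ℤ) = (x^2)⁻¹ := by
    intro x hx
    rw [zpow_neg, show ((2:ℤ)) = ((2:ℕ):ℤ) by norm_num, zpow_natCast]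
  have hsneg : -((n:ℤ) + (m:ℤ) - 2) = -s := by rw [hsdef]
  have hEexpr : α ^ (-((n:ℤ) + (m:ℤ) - 2)) * 10^d * F ^ (-2:ℤ) * (2*α - 1) ^ (-2:ℤ)
      * Ll⁻¹ * ((a:ℝ)/9) = Q / P := by
    rw [hsneg, zpow_neg, hpow2 F hF0, hpow2 _ (ne_of_gt h2α1), hQdef, hPdef, hcdef]
    have hαs : α ^ s ≠ 0 := ne_of_gt (zpow_pos hα0 _)
    field_simp
  rw [hEexpr, div_sub_one (ne_of_gt hPpos), abs_div, abs_of_pos hPpos,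
    div_lt_iff₀ hPpos]
  have hm2 : (0:ℝ) < α ^ ((m:ℤ) - 2) := zpow_pos hα0 _
  have hRHSeq : 25/4 / α ^ ((m:ℤ) - 2) * P = 25/4 * c^2 * α ^ (n:ℤ) * Ll := by
    have hzs2 : α ^ s = α ^ (n:ℤ) * α ^ ((m:ℤ)-2) := by
      rw [← zpow_add₀ hα0.ne']
      congr 1
      rw [hsdef]
      ring
    rw [hPdef, hzs2]
    field_simp
  rw [hRHSeq]
  have hQsum : Q = Ln * Lm * Ll + (a:ℝ)/9 := by
    rw [hQdef]
    have h10pos : (0:ℝ) < (10:ℝ)^d := by positivity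
    linarith [heqR]
  rw [hQsum, hPdef, hsdef]
  have hapos : (0:ℝ) < (a:ℝ) := by exact_mod_cast ha1
  have ha9R : (a:ℝ) ≤ 9 := by exact_mod_cast ha9
  exact key_estimate α c Ln Lm Ll (a:ℝ) (n:ℤ) (m:ℤ) (by exact_mod_cast hnm)
    (by positivity) hα85 hα₂ hc1 hc_hi hLl1 hLm0 hbn hbm hapos ha9R
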